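/- Let N₂₁ = [[−A₀, −A₁, …, −A_{k−3}],[B₀, B₁, …, B_{k−3}]] be a 2n × (k−2)n quaternionic block matrix. Then ‖N₂₁‖₂² ≤ (1/2)[ Σ_{i=0}^{k−3}(‖Aᵢ‖₂² + ‖Bᵢ‖₂²) + √((Σ_{i=0}^{k−3}(‖Aᵢ‖₂² − ‖Bᵢ‖₂²))² + 4‖Σ_{i=0}^{k−3} AᵢBᵢᴴ‖₂²) ]. -/

import Mathlib

open scoped Matrix Quaternion BigOperators

noncomputable section

/-- Euclidean norm of a vector with entries in a normed ring (e.g. the quaternions). -/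
def qVecNorm {R : Type*} [NormedRing R] {n : Type*} [Fintype n] (x : n → R) : ℝ :=
  Real.sqrt (∑ i, ‖x i‖ ^ 2)

/-- Operator 2-norm (spectral norm) of a matrix over a normed ring. -/
def qSpecNorm {R : Type*} [NormedRing R] {m n : Type*} [Fintype m] [Fintype n]
    (A : Matrix m n R) : ℝ :=
  sSup {c : ℝ | ∃ x : n → R, x ≠ 0 ∧ c = qVecNorm (A.mulVec x) / qVecNorm x}

/-- `μ` is a right eigenvalue of the quaternionic matrix `A`. -/
def RightEig {n : Type*} [Fintype n] (A : Matrix n n ℍ[ℝ]) (μ : ℍ[ℝ]) : Prop :=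
  ∃ x : n → ℍ[ℝ], x ≠ 0 ∧ A.mulVec x = fun i => x i * μ

/-- Right spectral radius of a quaternionic matrix. -/
def rSpecRad {n : Type*} [Fintype n] (A : Matrix n n ℍ[ℝ]) : ℝ :=
  sSup {r : ℝ | ∃ μ : ℍ[ℝ], RightEig A μ ∧ r = ‖μ‖}

/-- Spectral radius of a real 2×2 matrix. -/
def realSpecRad (B : Matrix (Fin 2) (Fin 2) ℝ) : ℝ :=
  sSup {r : ℝ | ∃ μ ∈ spectrum ℝ B, r = |μ|}

namespace QHelper

open Matrix Finset

variable {l m n : Type*} [Fintype l] [Fintype m] [Fintype n]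

lemma qVecNorm_nonneg (x : n → ℍ[ℝ]) : 0 ≤ qVecNorm x := Real.sqrt_nonneg _

lemma qVecNorm_sq (x : n → ℍ[ℝ]) : qVecNorm x ^ 2 = ∑ i, ‖x i‖ ^ 2 :=
  Real.sq_sqrt (by positivity)

lemma qVecNorm_eq_zero {x : n → ℍ[ℝ]} (h : qVecNorm x = 0) : x = 0 := by
  have h2 : ∑ i, ‖x i‖ ^ 2 = 0 := by
    have := qVecNorm_sq x; rw [h] at this; linarith [this]
  funext i
  have := (Finset.sum_eq_zero_iff_of_nonneg (fun i _ => by positivity)).mp h2 i (mem_univ i)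
  have : ‖x i‖ = 0 := by nlinarith [norm_nonneg (x i)]
  simpa using this

lemma qVecNorm_pos {x : n → ℍ[ℝ]} (h : x ≠ 0) : 0 < qVecNorm x :=
  lt_of_le_of_ne (qVecNorm_nonneg x) (fun h0 => h (qVecNorm_eq_zero h0.symm))

/-- real inner product of quaternion vectors -/
def ip (u v : n → ℍ[ℝ]) : ℝ := ∑ i, (star (u i) * v i).re

lemma ip_self (u : n → ℍ[ℝ]) : ip u u = qVecNorm u ^ 2 := by
  rw [qVecNorm_sq, ip]
  refine Finset.sum_congr rfl fun i _ => ?_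
  rw [Quaternion.star_mul_self]
  simp [Quaternion.normSq_eq_norm_mul_self, sq]

lemma re_abs_le_norm (q : ℍ[ℝ]) : |q.re| ≤ ‖q‖ := by
  have h1 : ‖q‖ * ‖q‖ = Quaternion.normSq q := (Quaternion.normSq_eq_norm_mul_self q).symm
  have h2 := Quaternion.normSq_def' q
  nlinarith [norm_nonneg q, sq_nonneg q.imI, sq_nonneg q.imJ, sq_nonneg q.imK, abs_nonneg q.re, sq_abs q.re]

lemma abs_ip_le (u v : n → ℍ[ℝ]) : |ip u v| ≤ qVecNorm u * qVecNorm v := by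
  have h1 : |ip u v| ≤ ∑ i, ‖u i‖ * ‖v i‖ := by
    refine (Finset.abs_sum_le_sum_abs _ _).trans (Finset.sum_le_sum fun i _ => ?_)
    calc |(star (u i) * v i).re| ≤ ‖star (u i) * v i‖ := re_abs_le_norm _
      _ = ‖u i‖ * ‖v i‖ := by rw [norm_mul, Quaternion.norm_star]
  refine h1.trans ?_
  have cs := Finset.sum_mul_sq_le_sq_mul_sq Finset.univ (fun i => ‖u i‖) (fun i => ‖v i‖)
  have hnn : (0:ℝ) ≤ ∑ i, ‖u i‖ * ‖v i‖ :=
    Finset.sum_nonneg fun i _ => mul_nonneg (norm_nonneg _) (norm_nonneg _)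
  have : (∑ i, ‖u i‖ * ‖v i‖) ≤ Real.sqrt ((∑ i, ‖u i‖^2) * (∑ i, ‖v i‖^2)) := by
    rw [show (∑ i, ‖u i‖ * ‖v i‖) = Real.sqrt ((∑ i, ‖u i‖ * ‖v i‖)^2) from
      (Real.sqrt_sq hnn).symm]
    exact Real.sqrt_le_sqrt cs
  calc (∑ i, ‖u i‖ * ‖v i‖) ≤ Real.sqrt ((∑ i, ‖u i‖^2) * (∑ i, ‖v i‖^2)) := this
    _ = qVecNorm u * qVecNorm v := Real.sqrt_mul (by positivity) _


lemma re_sum {ι : Type*} (s : Finset ι) (f : ι → ℍ[ℝ]) :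
    (∑ i ∈ s, f i).re = ∑ i ∈ s, (f i).re :=
  map_sum (QuaternionAlgebra.reₗ (R := ℝ) (-1) 0 (-1)) f s

lemma frob_bound (A : Matrix m n ℍ[ℝ]) (x : n → ℍ[ℝ]) :
    qVecNorm (A.mulVec x) ≤ Real.sqrt (∑ i, ∑ j, ‖A i j‖ ^ 2) * qVecNorm x := by
  have key : qVecNorm (A.mulVec x) ^ 2 ≤ (∑ i, ∑ j, ‖A i j‖ ^ 2) * qVecNorm x ^ 2 := by
    rw [qVecNorm_sq, qVecNorm_sq, Finset.sum_mul]
    refine Finset.sum_le_sum fun i _ => ?_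
    calc ‖A.mulVec x i‖ ^ 2 ≤ (∑ j, ‖A i j‖ * ‖x j‖) ^ 2 := by
          refine pow_le_pow_left₀ (norm_nonneg _) ?_ 2
          exact (norm_sum_le _ _).trans (Finset.sum_le_sum fun j _ => (norm_mul_le _ _))
      _ ≤ (∑ j, ‖A i j‖ ^ 2) * ∑ j, ‖x j‖ ^ 2 :=
          Finset.sum_mul_sq_le_sq_mul_sq _ _ _
  have h1 : qVecNorm (A.mulVec x) = Real.sqrt (qVecNorm (A.mulVec x) ^ 2) :=
    (Real.sqrt_sq (qVecNorm_nonneg _)).symm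
  rw [h1]
  calc Real.sqrt (qVecNorm (A.mulVec x) ^ 2)
      ≤ Real.sqrt ((∑ i, ∑ j, ‖A i j‖ ^ 2) * qVecNorm x ^ 2) := Real.sqrt_le_sqrt key
    _ = Real.sqrt (∑ i, ∑ j, ‖A i j‖ ^ 2) * qVecNorm x := by
        rw [Real.sqrt_mul (by positivity), Real.sqrt_sq (qVecNorm_nonneg _)]

lemma bddAbove_set (A : Matrix m n ℍ[ℝ]) :
    BddAbove {c : ℝ | ∃ x : n → ℍ[ℝ], x ≠ 0 ∧ c = qVecNorm (A.mulVec x) / qVecNorm x} := by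
  refine ⟨Real.sqrt (∑ i, ∑ j, ‖A i j‖ ^ 2), ?_⟩
  rintro c ⟨x, hx, rfl⟩
  rw [div_le_iff₀ (qVecNorm_pos hx)]
  exact frob_bound A x

lemma qSpecNorm_nonneg (A : Matrix m n ℍ[ℝ]) : 0 ≤ qSpecNorm A := by
  apply Real.sSup_nonneg
  rintro c ⟨x, hx, rfl⟩
  exact div_nonneg (qVecNorm_nonneg _) (qVecNorm_nonneg _)

lemma le_qSpecNorm (A : Matrix m n ℍ[ℝ]) (x : n → ℍ[ℝ]) :
    qVecNorm (A.mulVec x) ≤ qSpecNorm A * qVecNorm x := by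
  by_cases hx : x = 0
  · subst hx
    have : A.mulVec 0 = 0 := Matrix.mulVec_zero A
    rw [this]
    have h0 : qVecNorm (0 : m → ℍ[ℝ]) = 0 := by simp [qVecNorm]
    have h0' : qVecNorm (0 : n → ℍ[ℝ]) = 0 := by simp [qVecNorm]
    rw [h0, h0', mul_zero]
  · have hmem : qVecNorm (A.mulVec x) / qVecNorm x ∈
        {c : ℝ | ∃ y : n → ℍ[ℝ], y ≠ 0 ∧ c = qVecNorm (A.mulVec y) / qVecNorm y} :=
      ⟨x, hx, rfl⟩
    have hle := le_csSup (bddAbove_set A) hmem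
    rw [div_le_iff₀ (qVecNorm_pos hx)] at hle
    exact hle

lemma qSpecNorm_le {A : Matrix m n ℍ[ℝ]} {C : ℝ} (hC : 0 ≤ C)
    (h : ∀ x, qVecNorm (A.mulVec x) ≤ C * qVecNorm x) : qSpecNorm A ≤ C := by
  apply Real.sSup_le _ hC
  rintro c ⟨x, hx, rfl⟩
  rw [div_le_iff₀ (qVecNorm_pos hx)]
  exact h x

lemma ip_adjoint (A : Matrix m n ℍ[ℝ]) (u : m → ℍ[ℝ]) (w : n → ℍ[ℝ]) :
    ip (Aᴴ.mulVec u) w = ip u (A.mulVec w) := by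
  simp only [ip, Matrix.mulVec, dotProduct, Matrix.conjTranspose_apply,
    star_sum, Finset.sum_mul, Finset.mul_sum, re_sum]
  rw [Finset.sum_comm]
  refine Finset.sum_congr rfl fun i _ => Finset.sum_congr rfl fun j _ => ?_
  rw [StarMul.star_mul, star_star, mul_assoc]
lemma qSpecNorm_conjTranspose_le (A : Matrix m n ℍ[ℝ]) : qSpecNorm Aᴴ ≤ qSpecNorm A := by
  refine qSpecNorm_le (qSpecNorm_nonneg A) fun y => ?_
  set z := Aᴴ.mulVec y with hz
  have h1 : qVecNorm z ^ 2 = ip y (A.mulVec z) := by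
    rw [← ip_self, hz]
    exact ip_adjoint A y z
  have h2 : ip y (A.mulVec z) ≤ qVecNorm y * (qSpecNorm A * qVecNorm z) :=
    (le_abs_self _).trans ((abs_ip_le _ _).trans
      (mul_le_mul_of_nonneg_left (le_qSpecNorm A z) (qVecNorm_nonneg y)))
  rcases eq_or_lt_of_le (qVecNorm_nonneg z) with h0 | h0
  · rw [← h0]
    exact mul_nonneg (qSpecNorm_nonneg A) (qVecNorm_nonneg y)
  · have := h1 ▸ h2
    nlinarith [this]

lemma ip_comm (u v : n → ℍ[ℝ]) : ip u v = ip v u := by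
  refine Finset.sum_congr rfl fun i _ => ?_
  rw [show star (u i) * v i = star (star (v i) * u i) by rw [StarMul.star_mul, star_star]]
  exact Quaternion.re_star (star (v i) * u i)

lemma ip_expand (u v : n → ℍ[ℝ]) :
    ip (fun s => v s - u s) (fun s => v s - u s) = ip v v + ip u u - 2 * ip u v := by
  have h := ip_comm u v
  simp only [ip, star_sub, sub_mul, mul_sub] at *
  simp only [Quaternion.re_sub, Finset.sum_sub_distrib]
  linarith [h]

lemma ip_sum_right {ι : Type*} (s : Finset ι) (u : n → ℍ[ℝ]) (w : ι → n → ℍ[ℝ]) :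
    ip u (fun j => ∑ i ∈ s, w i j) = ∑ i ∈ s, ip u (w i) := by
  simp only [ip, Finset.mul_sum, re_sum]
  exact Finset.sum_comm

lemma quad_bound (α β t s₁ s₂ : ℝ) (hα : 0 ≤ α) (hβ : 0 ≤ β) (ht : 0 ≤ t)
    (hs₁ : 0 ≤ s₁) (hs₂ : 0 ≤ s₂) :
    α * s₁ ^ 2 + β * s₂ ^ 2 + 2 * t * s₁ * s₂ ≤
      (1 / 2) * (α + β + Real.sqrt ((α - β) ^ 2 + 4 * t ^ 2)) * (s₁ ^ 2 + s₂ ^ 2) := by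
  set d := Real.sqrt ((α - β) ^ 2 + 4 * t ^ 2) with hd
  have hd2 : d ^ 2 = (α - β) ^ 2 + 4 * t ^ 2 := Real.sq_sqrt (by positivity)
  have hdge : |α - β| ≤ d := by
    rw [hd, ← Real.sqrt_sq_eq_abs]
    exact Real.sqrt_le_sqrt (by nlinarith [sq_nonneg t])
  have hdge' : α - β ≤ d := (le_abs_self _).trans hdge
  have hdge'' : β - α ≤ d := by have := abs_sub_comm α β ▸ hdge; cases abs_cases (β - α) with
    | inl h => rw [abs_sub_comm] at hdge; linarith [le_abs_self (β - α), hdge]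
    | inr h => linarith [abs_nonneg (β-α), hdge]
  -- p := d - (α - β) ≥ 0, q := d + (α - β) ≥ 0, p*q = 4t²
  have hp : 0 ≤ d - (α - β) := by linarith
  have hq : 0 ≤ d + (α - β) := by linarith
  have hpq : (d - (α - β)) * (d + (α - β)) = 4 * t ^ 2 := by nlinarith [hd2]
  -- key : 4*t*s₁*s₂ ≤ p*s₁² + q*s₂²
  have key : 4 * t * s₁ * s₂ ≤ (d - (α - β)) * s₁ ^ 2 + (d + (α - β)) * s₂ ^ 2 := by
    have hX : 0 ≤ 4 * t * s₁ * s₂ := by positivity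
    have hY : 0 ≤ (d - (α - β)) * s₁ ^ 2 + (d + (α - β)) * s₂ ^ 2 := by
      have := mul_nonneg hp (sq_nonneg s₁); have := mul_nonneg hq (sq_nonneg s₂); linarith
    have hsq : (4 * t * s₁ * s₂) ^ 2 ≤ ((d - (α - β)) * s₁ ^ 2 + (d + (α - β)) * s₂ ^ 2) ^ 2 := by
      nlinarith [sq_nonneg ((d - (α - β)) * s₁ ^ 2 - (d + (α - β)) * s₂ ^ 2), hpq,
        sq_nonneg (s₁ * s₂)]
    exact (pow_le_pow_iff_left₀ hX hY (by norm_num)).mp hsq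
  nlinarith [key]

end QHelper

open QHelper Matrix in
set_option maxHeartbeats 1000000 in
theorem specNorm_twoBlockRow_le (m n : ℕ)
    (A B : ℕ → Matrix (Fin n) (Fin n) ℍ[ℝ]) :
    qSpecNorm (fun (p : Fin 2 × Fin n) (q : Fin m × Fin n) =>
        if p.1 = 0 then -(A (q.1 : ℕ)) p.2 q.2 else (B (q.1 : ℕ)) p.2 q.2) ^ 2 ≤
      (1 / 2) * ((∑ i ∈ Finset.range m, (qSpecNorm (A i) ^ 2 + qSpecNorm (B i) ^ 2)) +
        Real.sqrt ((∑ i ∈ Finset.range m, (qSpecNorm (A i) ^ 2 - qSpecNorm (B i) ^ 2)) ^ 2 +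
          4 * qSpecNorm (∑ i ∈ Finset.range m, A i * (B i)ᴴ) ^ 2)) := by
  classical
  set N : Matrix (Fin 2 × Fin n) (Fin m × Fin n) ℍ[ℝ] :=
    (fun (p : Fin 2 × Fin n) (q : Fin m × Fin n) =>
      if p.1 = 0 then -(A (q.1 : ℕ)) p.2 q.2 else (B (q.1 : ℕ)) p.2 q.2) with hN
  set α := ∑ i : Fin m, qSpecNorm (A (i : ℕ)) ^ 2 with hα
  set β := ∑ i : Fin m, qSpecNorm (B (i : ℕ)) ^ 2 with hβ
  set C : Matrix (Fin n) (Fin n) ℍ[ℝ] := ∑ i : Fin m, A (i : ℕ) * (B (i : ℕ))ᴴ with hC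
  set t := qSpecNorm C with ht
  have hα0 : 0 ≤ α := Finset.sum_nonneg fun i _ => sq_nonneg _
  have hβ0 : 0 ≤ β := Finset.sum_nonneg fun i _ => sq_nonneg _
  have ht0 : 0 ≤ t := qSpecNorm_nonneg C
  -- rewrite RHS
  have hsum1 : (∑ i ∈ Finset.range m, (qSpecNorm (A i) ^ 2 + qSpecNorm (B i) ^ 2)) = α + β := by
    rw [Finset.sum_add_distrib, hα, hβ, Finset.sum_range, Finset.sum_range]
  have hsum2 : (∑ i ∈ Finset.range m, (qSpecNorm (A i) ^ 2 - qSpecNorm (B i) ^ 2)) = α - β := by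
    rw [Finset.sum_sub_distrib, hα, hβ, Finset.sum_range, Finset.sum_range]
  have hsum3 : (∑ i ∈ Finset.range m, A i * (B i)ᴴ) = C := by
    rw [hC, Finset.sum_range]
  rw [hsum1, hsum2, hsum3]
  set lam := (1 / 2) * (α + β + Real.sqrt ((α - β) ^ 2 + 4 * t ^ 2)) with hlam
  have hlam0 : 0 ≤ lam := by
    have := Real.sqrt_nonneg ((α - β) ^ 2 + 4 * t ^ 2)
    rw [hlam]; linarith
  -- the key bound on Nᴴ
  have key : ∀ y : Fin 2 × Fin n → ℍ[ℝ],
      qVecNorm (Nᴴ.mulVec y) ≤ Real.sqrt lam * qVecNorm y := by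
    intro y
    set y₁ : Fin n → ℍ[ℝ] := fun s => y (0, s) with hy₁
    set y₂ : Fin n → ℍ[ℝ] := fun s => y (1, s) with hy₂
    set u : Fin m → Fin n → ℍ[ℝ] := fun i => ((A (i : ℕ))ᴴ).mulVec y₁ with hu
    set v : Fin m → Fin n → ℍ[ℝ] := fun i => ((B (i : ℕ))ᴴ).mulVec y₂ with hv
    have hNy : Nᴴ.mulVec y = fun q : Fin m × Fin n => v q.1 q.2 - u q.1 q.2 := by
      funext q
      simp only [Matrix.mulVec, dotProduct, Matrix.conjTranspose_apply, hN,
        Fintype.sum_prod_type, Fin.sum_univ_two, hu, hv, hy₁, hy₂]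
      simp only [Matrix.conjTranspose, Matrix.map_apply, Matrix.transpose, Matrix.of_apply]
      norm_num
      abel
    set s₁ := qVecNorm y₁ with hs₁
    set s₂ := qVecNorm y₂ with hs₂
    have hs₁0 : 0 ≤ s₁ := qVecNorm_nonneg _
    have hs₂0 : 0 ≤ s₂ := qVecNorm_nonneg _
    have hsq : qVecNorm (Nᴴ.mulVec y) ^ 2 =
        ∑ i : Fin m, (ip (v i) (v i) + ip (u i) (u i) - 2 * ip (u i) (v i)) := by
      rw [qVecNorm_sq, hNy, Fintype.sum_prod_type]
      refine Finset.sum_congr rfl fun i _ => ?_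
      calc ∑ s, ‖v i s - u i s‖ ^ 2
          = qVecNorm (fun s => v i s - u i s) ^ 2 := (qVecNorm_sq _).symm
        _ = ip (fun s => v i s - u i s) (fun s => v i s - u i s) := (ip_self _).symm
        _ = ip (v i) (v i) + ip (u i) (u i) - 2 * ip (u i) (v i) := ip_expand _ _
    have hcross : ∑ i : Fin m, ip (u i) (v i) = ip y₁ (C.mulVec y₂) := by
      have h1 : ∀ i : Fin m, ip (u i) (v i) =
          ip y₁ ((A (i : ℕ) * (B (i : ℕ))ᴴ).mulVec y₂) := fun i => by
        rw [hu, hv]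
        rw [ip_adjoint (A (i : ℕ)) y₁ ((B (i : ℕ))ᴴ.mulVec y₂), Matrix.mulVec_mulVec]
      rw [Finset.sum_congr rfl (fun i _ => h1 i), ← ip_sum_right]
      congr 1
      funext j
      rw [hC]
      simp only [Matrix.mulVec, dotProduct, Matrix.sum_apply, Finset.sum_mul]
      exact Finset.sum_comm
    have hub : ∀ i : Fin m, ip (u i) (u i) ≤ qSpecNorm (A (i : ℕ)) ^ 2 * s₁ ^ 2 := by
      intro i
      rw [ip_self, hu]
      have h1 : qVecNorm ((A (i : ℕ))ᴴ.mulVec y₁) ≤ qSpecNorm (A (i : ℕ)) * s₁ :=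
        (le_qSpecNorm _ _).trans
          (mul_le_mul_of_nonneg_right (qSpecNorm_conjTranspose_le _) hs₁0)
      calc qVecNorm ((A (i : ℕ))ᴴ.mulVec y₁) ^ 2
          ≤ (qSpecNorm (A (i : ℕ)) * s₁) ^ 2 :=
            pow_le_pow_left₀ (qVecNorm_nonneg _) h1 2
        _ = qSpecNorm (A (i : ℕ)) ^ 2 * s₁ ^ 2 := mul_pow _ _ 2
    have hvb : ∀ i : Fin m, ip (v i) (v i) ≤ qSpecNorm (B (i : ℕ)) ^ 2 * s₂ ^ 2 := by
      intro i
      rw [ip_self, hv]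
      have h1 : qVecNorm ((B (i : ℕ))ᴴ.mulVec y₂) ≤ qSpecNorm (B (i : ℕ)) * s₂ :=
        (le_qSpecNorm _ _).trans
          (mul_le_mul_of_nonneg_right (qSpecNorm_conjTranspose_le _) hs₂0)
      calc qVecNorm ((B (i : ℕ))ᴴ.mulVec y₂) ^ 2
          ≤ (qSpecNorm (B (i : ℕ)) * s₂) ^ 2 :=
            pow_le_pow_left₀ (qVecNorm_nonneg _) h1 2
        _ = qSpecNorm (B (i : ℕ)) ^ 2 * s₂ ^ 2 := mul_pow _ _ 2
    have hcb : |ip y₁ (C.mulVec y₂)| ≤ t * (s₁ * s₂) := by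
      refine (abs_ip_le _ _).trans ?_
      have h1 : qVecNorm (C.mulVec y₂) ≤ t * s₂ := le_qSpecNorm C y₂
      calc qVecNorm y₁ * qVecNorm (C.mulVec y₂) ≤ s₁ * (t * s₂) :=
        mul_le_mul_of_nonneg_left h1 hs₁0
        _ = t * (s₁ * s₂) := by ring
    have hyy : qVecNorm y ^ 2 = s₁ ^ 2 + s₂ ^ 2 := by
      rw [hs₁, hs₂, qVecNorm_sq, qVecNorm_sq, qVecNorm_sq, Fintype.sum_prod_type,
        Fin.sum_univ_two]
    have hmain : qVecNorm (Nᴴ.mulVec y) ^ 2 ≤ lam * qVecNorm y ^ 2 := by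
      rw [hsq, hyy]
      have h1 : ∑ i : Fin m, (ip (v i) (v i) + ip (u i) (u i) - 2 * ip (u i) (v i)) =
          (∑ i : Fin m, ip (v i) (v i)) + (∑ i : Fin m, ip (u i) (u i)) -
            2 * ip y₁ (C.mulVec y₂) := by
        rw [← hcross, Finset.mul_sum, ← Finset.sum_add_distrib, ← Finset.sum_sub_distrib]
      rw [h1]
      have h2 : ∑ i : Fin m, ip (v i) (v i) ≤ β * s₂ ^ 2 := by
        rw [hβ, Finset.sum_mul]
        exact Finset.sum_le_sum fun i _ => hvb i
      have h3 : ∑ i : Fin m, ip (u i) (u i) ≤ α * s₁ ^ 2 := by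
        rw [hα, Finset.sum_mul]
        exact Finset.sum_le_sum fun i _ => hub i
      have h4 : -(2 * ip y₁ (C.mulVec y₂)) ≤ 2 * (t * (s₁ * s₂)) := by
        have h0 := neg_abs_le (ip y₁ (C.mulVec y₂))
        linarith [hcb]
      have h5 := quad_bound α β t s₁ s₂ hα0 hβ0 ht0 hs₁0 hs₂0
      rw [hlam]
      linarith [h2, h3, h4, h5]
    calc qVecNorm (Nᴴ.mulVec y)
        = Real.sqrt (qVecNorm (Nᴴ.mulVec y) ^ 2) := (Real.sqrt_sq (qVecNorm_nonneg _)).symm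
      _ ≤ Real.sqrt (lam * qVecNorm y ^ 2) := Real.sqrt_le_sqrt hmain
      _ = Real.sqrt lam * qVecNorm y := by
          rw [Real.sqrt_mul hlam0, Real.sqrt_sq (qVecNorm_nonneg _)]
  have h1 : qSpecNorm Nᴴ ≤ Real.sqrt lam := qSpecNorm_le (Real.sqrt_nonneg _) key
  have h2 : qSpecNorm N ≤ qSpecNorm Nᴴ := by
    have := qSpecNorm_conjTranspose_le Nᴴ
    rwa [Matrix.conjTranspose_conjTranspose] at this
  calc qSpecNorm N ^ 2 ≤ Real.sqrt lam ^ 2 :=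
      pow_le_pow_left₀ (qSpecNorm_nonneg N) (h2.trans h1) 2
    _ = lam := Real.sq_sqrt hlam0
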